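/- Under the doubly-linked-list invariant in which between any two consecutive unfinalized nodes there is at most one finalized node pointed into the list (and finalized nodes point only to unfinalized nodes or ⊥), if the last unfinalized node u_n is reachable from the head and right(u_i) ∈ {u_{i+1}, y} with left(y)=u_i, right(y)=u_{i+1} for some finalized y, then every unfinalized node u_i is reachable from the head by following left pointers from u_n and the chain structure; in particular all unfinalized nodes are lr-reachable. -/
import Mathlib


/-- One pointer-following step: `y` is the `right` or `left` pointer of `x`. -/
def Step {α : Type} (left right : α → Option α) (x y : α) : Prop :=
  right x = some y ∨ left x = some y

/-- lr-reachability: reachable by following a finite sequence of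
`left`/`right` pointers. -/
def Reach {α : Type} (left right : α → Option α) : α → α → Prop :=
  Relation.ReflTransGen (Step left right)

/-- Let `u 0 <_c u 1 <_c ⋯ <_c u (n-1)` be the unfinalized nodes of the list.
Assume the doubly-linked-list invariant: for each `i`, either
`left (u (i+1)) = u i` directly (cases (b) and (c) of the invariant, where
`u i ↔ u (i+1)` or `u i ← y → u (i+1)` with `u i ← u (i+1)` for a finalized
`y`), or there is a (finalized) node `y` with `left (u (i+1)) = y` and
`left y = u i` (case (a), `u i ↔ y ↔ u (i+1)`).  If the last unfinalized node
`u (n-1)` is reachable from the head, then every unfinalized node `u i` is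
lr-reachable from the head. -/
theorem all_unfinalized_lr_reachable {α : Type}
    (left right : α → Option α) (head : α) (n : ℕ) (hn : 0 < n) (u : ℕ → α)
    (hlast : Reach left right head (u (n - 1)))
    (hinv : ∀ i : ℕ, i + 1 < n →
      left (u (i + 1)) = some (u i) ∨
      ∃ y : α, left (u (i + 1)) = some y ∧ left y = some (u i)) :
    ∀ i : ℕ, i < n → Reach left right head (u i) := by
  have step : ∀ i : ℕ, i + 1 < n → Reach left right head (u (i + 1)) →
      Reach left right head (u i) := by
    intro i hi h
    rcases hinv i hi with h1 | ⟨y, h1, h2⟩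
    · exact h.tail (Or.inr h1)
    · exact (h.tail (Or.inr h1)).tail (Or.inr h2)
  have key : ∀ d : ℕ, d ≤ n - 1 → Reach left right head (u (n - 1 - d)) := by
    intro d
    induction d with
    | zero => intro _; simpa using hlast
    | succ d ih =>
      intro hd
      have h1 : n - 1 - d = (n - 1 - (d + 1)) + 1 := by omega
      have h2 : (n - 1 - (d + 1)) + 1 < n := by omega
      exact step _ h2 (h1 ▸ ih (by omega))
  intro i hi
  have := key (n - 1 - i) (by omega)
  have h3 : n - 1 - (n - 1 - i) = i := by omega
  rwa [h3] at this
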